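/- arXiv:2502.04437 — 2 statements merged into one kernel-verified Lean document; each statement's English description precedes it below -/
import Mathlib

section
/- For two unit vectors ψ and φ in a complex Hilbert space, the nonzero eigenvalues of the operator |ψ⟩⟨ψ| − |φ⟩⟨φ| are exactly ±sin θ, where cos θ = |⟨ψ|φ⟩|. In particular, the operator norm of |ψ⟩⟨ψ| − |φ⟩⟨φ| equals sin θ. -/
open scoped InnerProductSpace ENNReal NNReal

/-- For unit vectors `ψ, φ` in a finite-dimensional complex Hilbert space, the
nonzero eigenvalues of `|ψ⟩⟨ψ| − |φ⟩⟨φ|` are exactly `± sin θ`, where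
`cos θ = |⟨ψ|φ⟩|` with `θ ∈ [0, π/2]`; moreover the operator norm of
`|ψ⟩⟨ψ| − |φ⟩⟨φ|` equals `sin θ`. -/
theorem eigenvalues_of_proj_sub_proj {n : ℕ}
    (ψ φ : EuclideanSpace ℂ (Fin n)) (hψ : ‖ψ‖ = 1) (hφ : ‖φ‖ = 1)
    (T : EuclideanSpace ℂ (Fin n) →L[ℂ] EuclideanSpace ℂ (Fin n))
    (hT : ∀ x, T x = (inner ℂ ψ x : ℂ) • ψ - (inner ℂ φ x : ℂ) • φ)
    (θ : ℝ) (hθ : θ = Real.arccos ‖(inner ℂ ψ φ : ℂ)‖) :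
    (∀ μ : ℂ, μ ≠ 0 →
      (Module.End.HasEigenvalue (T : EuclideanSpace ℂ (Fin n) →ₗ[ℂ] EuclideanSpace ℂ (Fin n)) μ ↔
        μ = (Real.sin θ : ℂ) ∨ μ = -(Real.sin θ : ℂ))) ∧
    ‖T‖ = Real.sin θ := by
  set g : ℂ := inner ℂ ψ φ with hg
  set c : ℝ := ‖g‖ with hcdef
  set s : ℝ := Real.sin θ with hsdef
  have hc0 : 0 ≤ c := norm_nonneg g
  have hc1 : c ≤ 1 := by
    have := norm_inner_le_norm (𝕜 := ℂ) ψ φ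
    rwa [hψ, hφ, one_mul] at this
  have hc21 : 0 ≤ 1 - c ^ 2 := by nlinarith
  have hs : s = Real.sqrt (1 - c ^ 2) := by
    rw [hsdef, hθ, Real.sin_arccos]
  have hs0 : 0 ≤ s := by rw [hs]; exact Real.sqrt_nonneg _
  have hs2 : s ^ 2 = 1 - c ^ 2 := by rw [hs, Real.sq_sqrt hc21]
  have hψψ : (inner ℂ ψ ψ : ℂ) = 1 := by
    rw [inner_self_eq_norm_sq_to_K, hψ]; norm_num
  have hφφ : (inner ℂ φ φ : ℂ) = 1 := by
    rw [inner_self_eq_norm_sq_to_K, hφ]; norm_num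
  have hconj : (inner ℂ φ ψ : ℂ) = starRingEnd ℂ g := by
    rw [hg, inner_conj_symm]
  have hgg : starRingEnd ℂ g * g = (c : ℂ) ^ 2 := by
    rw [mul_comm, Complex.mul_conj, Complex.normSq_eq_norm_sq, hcdef]
    push_cast; ring
  have hs2C : (s : ℂ) ^ 2 = 1 - (c : ℂ) ^ 2 := by
    have := congrArg (Complex.ofReal) hs2
    push_cast at this
    exact this
  have main : ∀ μ : ℂ, μ ≠ 0 →
      (Module.End.HasEigenvalue
        (T : EuclideanSpace ℂ (Fin n) →ₗ[ℂ] EuclideanSpace ℂ (Fin n)) μ ↔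
        μ = (s : ℂ) ∨ μ = -(s : ℂ)) := by
    intro μ hμ
    constructor
    · intro hev
      obtain ⟨x, hx⟩ := hev.exists_hasEigenvector
      have hx0 : x ≠ 0 := hx.2
      have hTx : ((inner ℂ ψ x : ℂ) • ψ - (inner ℂ φ x : ℂ) • φ :
          EuclideanSpace ℂ (Fin n)) = μ • x := by
        rw [← hT x]
        have := hx.apply_eq_smul
        rwa [ContinuousLinearMap.coe_coe] at this
      set p : ℂ := inner ℂ ψ x with hp
      set q : ℂ := inner ℂ φ x with hq
      have e1 : p - q * g = μ * p := by
        have := congrArg (fun y : EuclideanSpace ℂ (Fin n) => (inner ℂ ψ y : ℂ)) hTx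
        simpa [inner_sub_right, inner_smul_right, hψψ, hψ, ← hg, ← hp, ← hq, mul_comm] using this
      have e2 : p * starRingEnd ℂ g - q = μ * q := by
        have := congrArg (fun y : EuclideanSpace ℂ (Fin n) => (inner ℂ φ y : ℂ)) hTx
        simpa [inner_sub_right, inner_smul_right, hφφ, hφ, hconj, ← hp, ← hq, mul_comm,
          mul_left_comm] using this
      have hkey : (1 - μ ^ 2 - (c : ℂ) ^ 2) * q = 0 := by
        linear_combination (starRingEnd ℂ g) * e1 - (1 - μ) * e2 + q * hgg
      have hμ2 : μ ^ 2 = (s : ℂ) ^ 2 := by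
        rcases mul_eq_zero.mp hkey with h | h
        · rw [hs2C]; linear_combination -h
        · have hp0 : p ≠ 0 := by
            intro hp0
            apply hx0
            have h0 : μ • x = (0 : EuclideanSpace ℂ (Fin n)) := by
              rw [← hTx, hp0, h]; simp
            simpa [hμ] using smul_eq_zero.mp h0
          have hμ1 : μ = 1 := by
            have h1 : p * (1 - μ) = 0 := by linear_combination e1 + g * h
            rcases mul_eq_zero.mp h1 with h2 | h2
            · exact absurd h2 hp0
            · exact (sub_eq_zero.mp h2).symm
          have hg0 : starRingEnd ℂ g = 0 := by
            have h1 : p * starRingEnd ℂ g = 0 := by linear_combination e2 + (1 + μ) * h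
            rcases mul_eq_zero.mp h1 with h2 | h2
            · exact absurd h2 hp0
            · exact h2
          have hcc : (c : ℂ) ^ 2 = 0 := by rw [← hgg, hg0, zero_mul]
          rw [hs2C, hcc, hμ1]; ring
      have hfac : (μ - (s : ℂ)) * (μ + (s : ℂ)) = 0 := by linear_combination hμ2
      rcases mul_eq_zero.mp hfac with h | h
      · exact Or.inl (sub_eq_zero.mp h)
      · exact Or.inr (eq_neg_of_add_eq_zero_left h)
    · intro hμs
      have hsne : (s : ℂ) ≠ 0 := by
        rcases hμs with h | h
        · rw [← h]; exact hμ
        · intro h0; apply hμ; rw [h, h0, neg_zero]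
      have hspos : 0 < s := by
        rcases lt_or_eq_of_le hs0 with h | h
        · exact h
        · exact absurd (by exact_mod_cast h.symm : (s : ℂ) = 0) hsne
      rcases hμs with h | h
      · -- μ = s ; eigenvector x = (s+1) • ψ - conj g • φ
        set x : EuclideanSpace ℂ (Fin n) :=
          ((s : ℂ) + 1) • ψ - (starRingEnd ℂ g) • φ with hxdef
        have hipψ : (inner ℂ ψ x : ℂ) = (s : ℂ) * ((s : ℂ) + 1) := by
          rw [hxdef]
          simp only [inner_sub_right, inner_smul_right, hψψ, ← hg]
          linear_combination -hgg - hs2C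
        have hipφ : (inner ℂ φ x : ℂ) = (s : ℂ) * starRingEnd ℂ g := by
          rw [hxdef]
          simp only [inner_sub_right, inner_smul_right, hφφ, hconj]
          ring
        have hx0 : x ≠ 0 := by
          intro h0
          have : (inner ℂ ψ x : ℂ) = 0 := by rw [h0, inner_zero_right]
          rw [hipψ] at this
          rcases mul_eq_zero.mp this with h1 | h1
          · exact hsne h1
          · have : (s : ℂ) = -1 := by linear_combination h1
            have : s = -1 := by exact_mod_cast this
            linarith
        apply Module.End.hasEigenvalue_of_hasEigenvector (x := x)
        refine ⟨Module.End.mem_eigenspace_iff.mpr ?_, hx0⟩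
        rw [ContinuousLinearMap.coe_coe, hT x, hipψ, hipφ, h, hxdef]
        match_scalars <;> ring
      · -- μ = -s ; eigenvector x = g • ψ + (-s-1) • φ
        set x : EuclideanSpace ℂ (Fin n) :=
          g • ψ + (-(s : ℂ) - 1) • φ with hxdef
        have hipψ : (inner ℂ ψ x : ℂ) = -(s : ℂ) * g := by
          rw [hxdef]
          simp only [inner_add_right, inner_smul_right, hψψ, ← hg]
          ring
        have hipφ : (inner ℂ φ x : ℂ) = -((s : ℂ) * ((s : ℂ) + 1)) := by
          rw [hxdef]
          simp only [inner_add_right, inner_smul_right, hφφ, hconj]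
          linear_combination hgg + hs2C
        have hx0 : x ≠ 0 := by
          intro h0
          have : (inner ℂ φ x : ℂ) = 0 := by rw [h0, inner_zero_right]
          rw [hipφ] at this
          have h1 : (s : ℂ) * ((s : ℂ) + 1) = 0 := by linear_combination -this
          rcases mul_eq_zero.mp h1 with h2 | h2
          · exact hsne h2
          · have : (s : ℂ) = -1 := by linear_combination h2
            have : s = -1 := by exact_mod_cast this
            linarith
        apply Module.End.hasEigenvalue_of_hasEigenvector (x := x)
        refine ⟨Module.End.mem_eigenspace_iff.mpr ?_, hx0⟩
        rw [ContinuousLinearMap.coe_coe, hT x, hipψ, hipφ, h, hxdef]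
        match_scalars <;> ring
  refine ⟨main, ?_⟩
  -- the norm
  have hsym : (T : EuclideanSpace ℂ (Fin n) →ₗ[ℂ] EuclideanSpace ℂ (Fin n)).IsSymmetric := by
    intro x y
    simp only [ContinuousLinearMap.coe_coe, hT, inner_sub_left, inner_sub_right,
      inner_smul_left, inner_smul_right, inner_conj_symm]
    ring
  have hsa : IsSelfAdjoint T := ContinuousLinearMap.isSelfAdjoint_iff_isSymmetric.mpr hsym
  have hrad : spectralRadius ℂ T = ‖T‖₊ := hsa.spectralRadius_eq_nnnorm
  have hspec : spectrum ℂ T = spectrum ℂ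
      (T : EuclideanSpace ℂ (Fin n) →ₗ[ℂ] EuclideanSpace ℂ (Fin n)) := by
    ext μ
    rw [spectrum.mem_iff, spectrum.mem_iff, not_iff_not,
      ContinuousLinearMap.isUnit_iff_bijective, Module.End.isUnit_iff]
    have h : ⇑(algebraMap ℂ (EuclideanSpace ℂ (Fin n) →L[ℂ] EuclideanSpace ℂ (Fin n)) μ - T)
        = ⇑(algebraMap ℂ (Module.End ℂ (EuclideanSpace ℂ (Fin n))) μ -
          (T : EuclideanSpace ℂ (Fin n) →ₗ[ℂ] EuclideanSpace ℂ (Fin n))) := by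
      ext x i; simp [Algebra.algebraMap_eq_smul_one]
    rw [h]
  have hsnn : ‖((s : ℂ))‖₊ = s.toNNReal := by
    simp [Real.nnnorm_of_nonneg hs0, Real.toNNReal_of_nonneg hs0]
  have hradval : spectralRadius ℂ T = (s.toNNReal : ℝ≥0∞) := by
    apply le_antisymm
    · apply iSup₂_le
      intro μ hμ
      by_cases hμ0 : μ = 0
      · simp [hμ0]
      · have := (main μ hμ0).mp (Module.End.HasEigenvalue.of_mem_spectrum
          (by rwa [← hspec]))
        rcases this with h | h <;> rw [h] <;> simp [hsnn]
    · rcases lt_or_eq_of_le hs0 with hpos | hzero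
      · have hsne : ((s : ℝ) : ℂ) ≠ 0 := by
          simp only [ne_eq, Complex.ofReal_eq_zero]; linarith
        have hmem : ((s : ℝ) : ℂ) ∈ spectrum ℂ T := by
          rw [hspec, ← Module.End.hasEigenvalue_iff_mem_spectrum]
          exact (main _ hsne).mpr (Or.inl rfl)
        calc (s.toNNReal : ℝ≥0∞) = ‖((s : ℝ) : ℂ)‖₊ := by rw [hsnn]
          _ ≤ spectralRadius ℂ T := le_iSup₂ (f := fun k (_ : k ∈ spectrum ℂ T) =>
              (‖k‖₊ : ℝ≥0∞)) _ hmem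
      · rw [← hzero]; simp
  rw [hrad] at hradval
  have : ‖T‖₊ = s.toNNReal := by exact_mod_cast hradval
  calc ‖T‖ = (‖T‖₊ : ℝ) := rfl
    _ = (s.toNNReal : ℝ) := by rw [this]
    _ = s := Real.coe_toNNReal s hs0
end

section
/- For 0 < ε < 1, the spherical cap on the unit sphere S^{p−1} consisting of all points within Euclidean distance ε of a fixed point x₀ ∈ S^{p−1} has area strictly less than g(ε)^{p−1}·V_{p−1}, where g(ε) = ε/√(1−ε²) and V_{p−1} is the volume of the unit (p−1)-ball. -/
open MeasureTheory Metric Set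
open scoped Pointwise ENNReal RealInnerProductSpace

set_option maxHeartbeats 1000000 in
/-- For `0 < ε < 1`, the spherical cap on `S^{p−1}` of points within Euclidean
distance `ε` of a fixed point `x₀ ∈ S^{p−1}` has area strictly less than
`g(ε)^{p−1} · V_{p−1}`, where `g(ε) = ε/√(1−ε²)` and `V_{p−1}` is the volume of
the unit ball in `ℝ^{p−1}`. -/
theorem cap_area_lt (p : ℕ) (hp : 2 ≤ p) (ε : ℝ) (hε0 : 0 < ε) (hε1 : ε < 1)
    (x₀ : sphere (0 : EuclideanSpace ℝ (Fin p)) 1)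
    (μs : Measure (sphere (0 : EuclideanSpace ℝ (Fin p)) 1))
    (hμs : μs = (volume : Measure (EuclideanSpace ℝ (Fin p))).toSphere)
    (V : ℝ) (hV : V = (volume (ball (0 : EuclideanSpace ℝ (Fin (p - 1))) 1)).toReal) :
    (μs {x | ‖(x : EuclideanSpace ℝ (Fin p)) - (x₀ : EuclideanSpace ℝ (Fin p))‖ ≤ ε}).toReal
      < (ε / Real.sqrt (1 - ε ^ 2)) ^ (p - 1) * V := by
  obtain ⟨n, rfl⟩ : ∃ n, p = n + 1 := ⟨p - 1, by omega⟩
  have hn : 1 ≤ n := by omega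
  simp only [Nat.add_sub_cancel] at hV ⊢
  -- constants
  set g : ℝ := ε / Real.sqrt (1 - ε ^ 2) with hg
  set a : ℝ := ε * Real.sqrt (1 - ε ^ 2 / 4) / (1 - ε ^ 2 / 2) with hadef
  have h2 : (0:ℝ) < 1 - ε ^ 2 / 2 := by nlinarith
  have he2 : (0:ℝ) < 1 - ε ^ 2 := by nlinarith
  have hs1 : Real.sqrt (1 - ε ^ 2 / 4) ^ 2 = 1 - ε ^ 2 / 4 := Real.sq_sqrt (by nlinarith)
  have hs2 : Real.sqrt (1 - ε ^ 2) ^ 2 = 1 - ε ^ 2 := Real.sq_sqrt he2.le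
  have hs2pos : 0 < Real.sqrt (1 - ε ^ 2) := Real.sqrt_pos.2 he2
  have ha0 : 0 ≤ a := by positivity
  have hg0 : 0 ≤ g := by positivity
  have ha2 : a ^ 2 * (1 - ε ^ 2 / 2) ^ 2 = ε ^ 2 * (1 - ε ^ 2 / 4) := by
    rw [hadef, div_pow, mul_pow, hs1, div_mul_cancel₀]
    positivity
  have hag : a < g := by
    refine lt_of_pow_lt_pow_left₀ 2 hg0 ?_
    have hgsq : g ^ 2 * (1 - ε ^ 2) = ε ^ 2 := by
      rw [hg, div_pow, hs2, div_mul_cancel₀]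
      exact he2.ne'
    have hmul : a ^ 2 * ((1 - ε ^ 2 / 2) ^ 2 * (1 - ε ^ 2))
        < g ^ 2 * ((1 - ε ^ 2 / 2) ^ 2 * (1 - ε ^ 2)) := by
      calc a ^ 2 * ((1 - ε ^ 2 / 2) ^ 2 * (1 - ε ^ 2))
          = (ε ^ 2 * (1 - ε ^ 2 / 4)) * (1 - ε ^ 2) := by linear_combination (1 - ε ^ 2) * ha2
        _ < ε ^ 2 * (1 - ε ^ 2 / 2) ^ 2 := by nlinarith [pow_pos hε0 4]
        _ = g ^ 2 * ((1 - ε ^ 2 / 2) ^ 2 * (1 - ε ^ 2)) := by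
            linear_combination (-(1 - ε ^ 2 / 2) ^ 2) * hgsq
    exact lt_of_mul_lt_mul_right hmul (by positivity)
  -- an orthonormal basis with `b 0 = x₀`
  have hx₀ : ‖(x₀ : EuclideanSpace ℝ (Fin (n+1)))‖ = 1 := norm_eq_of_mem_sphere x₀
  obtain ⟨b, hb0⟩ : ∃ b : OrthonormalBasis (Fin (n+1)) ℝ (EuclideanSpace ℝ (Fin (n+1))),
      b 0 = (x₀ : EuclideanSpace ℝ (Fin (n+1))) := by
    have hcard : Module.finrank ℝ (EuclideanSpace ℝ (Fin (n+1))) = Fintype.card (Fin (n+1)) := by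
      simp [finrank_euclideanSpace_fin]
    have horth : Orthonormal ℝ (({0} : Set (Fin (n+1))).restrict
        (fun _ => (x₀ : EuclideanSpace ℝ (Fin (n+1))))) := by
      constructor
      · intro i; exact hx₀
      · rintro ⟨i, hi⟩ ⟨j, hj⟩ hij
        simp only [mem_singleton_iff] at hi hj
        exact absurd (Subtype.ext (hi.trans hj.symm)) hij
    obtain ⟨b, hb⟩ := horth.exists_orthonormalBasis_extension_of_card_eq hcard
    exact ⟨b, hb 0 rfl⟩
  -- the norm of the orthogonal part, in coordinates
  have hnorm_repr : ∀ y : EuclideanSpace ℝ (Fin (n+1)),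
      ‖y - (b.repr y 0) • b 0‖ ^ 2 = ∑ j : Fin n, (b.repr y ((0 : Fin (n+1)).succAbove j)) ^ 2 := by
    intro y
    have h1 : ‖y - (b.repr y 0) • b 0‖ = ‖b.repr (y - (b.repr y 0) • b 0)‖ :=
      (b.repr.norm_map _).symm
    rw [h1, EuclideanSpace.norm_eq, Real.sq_sqrt (by positivity),
      Fin.sum_univ_succAbove (fun i => ‖b.repr (y - (b.repr y 0) • b 0) i‖ ^ 2) 0]
    have hrepr : ∀ i, b.repr (y - (b.repr y 0) • b 0) i
        = b.repr y i - (b.repr y 0) * (if i = 0 then 1 else 0) := by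
      intro i
      rw [map_sub, LinearIsometryEquiv.map_smul]
      simp [b.repr_self, EuclideanSpace.single_apply, eq_comm]
    simp [hrepr, Real.norm_eq_abs, sq_abs, Fin.succAbove_zero, Fin.succ_ne_zero]
  -- the measure-preserving coordinate map
  have hΦ : MeasurePreserving
      ((MeasurableEquiv.piFinSuccAbove (fun _ : Fin (n+1) => ℝ) 0) ∘
        (MeasurableEquiv.toLp 2 (Fin (n+1) → ℝ)).symm ∘ b.measurableEquiv)
      volume volume :=
    (volume_preserving_piFinSuccAbove (fun _ : Fin (n+1) => ℝ) 0).comp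
      ((EuclideanSpace.volume_preserving_symm_measurableEquiv_toLp (Fin (n+1))).comp
        b.measurePreserving_measurableEquiv)
  set Φ : EuclideanSpace ℝ (Fin (n+1)) → ℝ × (Fin n → ℝ) :=
    (MeasurableEquiv.piFinSuccAbove (fun _ : Fin (n+1) => ℝ) 0) ∘
      (MeasurableEquiv.toLp 2 (Fin (n+1) → ℝ)).symm ∘ b.measurableEquiv with hΦdef
  have hΦapp : ∀ y : EuclideanSpace ℝ (Fin (n+1)),
      Φ y = (b.repr y 0, fun j => b.repr y ((0 : Fin (n+1)).succAbove j)) := fun _ => rfl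
  -- the target coordinate set
  set D : Set (ℝ × (Fin n → ℝ)) :=
    {z | z.1 ∈ Ioo (0:ℝ) 1 ∧ ∑ j, z.2 j ^ 2 ≤ a ^ 2 * z.1 ^ 2} with hDdef
  have hDmeas : MeasurableSet D :=
    (measurableSet_Ioo.preimage measurable_fst).inter
      (measurableSet_le (f := fun z : ℝ × (Fin n → ℝ) => ∑ j, z.2 j ^ 2)
        (g := fun z : ℝ × (Fin n → ℝ) => a ^ 2 * z.1 ^ 2) (by fun_prop) (by fun_prop))
  -- the cap
  set cap : Set (sphere (0 : EuclideanSpace ℝ (Fin (n+1))) 1) :=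
    {x | ‖(x : EuclideanSpace ℝ (Fin (n+1))) - (x₀ : EuclideanSpace ℝ (Fin (n+1)))‖ ≤ ε}
    with hcapdef
  have hcapm : MeasurableSet cap := by
    have : cap = Subtype.val ⁻¹' closedBall (x₀ : EuclideanSpace ℝ (Fin (n+1))) ε := by
      ext x
      simp [hcapdef, Subtype.dist_eq, dist_eq_norm]
    exact this ▸ measurableSet_closedBall.preimage measurable_subtype_coe
  -- containment of the solid cone over the cap in `Φ ⁻¹' D`
  have hsub : (Ioo (0:ℝ) 1 • (Subtype.val '' cap)) ⊆ Φ ⁻¹' D := by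
    rintro y hy
    rw [Set.mem_smul] at hy
    obtain ⟨t, ht, z, hz, rfl⟩ := hy
    obtain ⟨x, hx, rfl⟩ := hz
    have hxnorm : ‖(x : EuclideanSpace ℝ (Fin (n+1)))‖ = 1 := norm_eq_of_mem_sphere x
    set c : ℝ := b.repr (x : EuclideanSpace ℝ (Fin (n+1))) 0 with hc
    have hcinner : c = ⟪(x₀ : EuclideanSpace ℝ (Fin (n+1))), (x : EuclideanSpace ℝ (Fin (n+1)))⟫ := by
      rw [hc, b.repr_apply_apply, hb0]
    -- bounds on c
    have hcap : ‖(x : EuclideanSpace ℝ (Fin (n+1))) - (x₀ : EuclideanSpace ℝ (Fin (n+1)))‖ ≤ ε := hx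
    have hexp : ‖(x : EuclideanSpace ℝ (Fin (n+1))) - (x₀ : EuclideanSpace ℝ (Fin (n+1)))‖ ^ 2
        = 2 - 2 * c := by
      rw [norm_sub_sq_real, hxnorm, hx₀, hcinner, real_inner_comm]
      ring
    have hsq : ‖(x : EuclideanSpace ℝ (Fin (n+1))) - (x₀ : EuclideanSpace ℝ (Fin (n+1)))‖ ^ 2
        ≤ ε ^ 2 := by
      have := pow_le_pow_left₀ (norm_nonneg _) hcap 2
      simpa using this
    have hclb : 1 - ε ^ 2 / 2 ≤ c := by
      rw [hexp] at hsq; linarith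
    have hcpos : 0 < c := lt_of_lt_of_le (by nlinarith) hclb
    have hcub : c ≤ 1 := by
      have := real_inner_le_norm (x₀ : EuclideanSpace ℝ (Fin (n+1)))
        (x : EuclideanSpace ℝ (Fin (n+1)))
      rw [hxnorm, hx₀] at this
      simpa [hcinner] using this
    -- coordinates of t • x
    have hrt : ∀ i, b.repr (t • (x : EuclideanSpace ℝ (Fin (n+1)))) i
        = t * b.repr (x : EuclideanSpace ℝ (Fin (n+1))) i := by
      intro i
      rw [LinearIsometryEquiv.map_smul]
      rfl
    rw [mem_preimage, hΦapp]
    constructor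
    · simp only [hrt, ← hc]
      exact ⟨mul_pos ht.1 hcpos, by nlinarith [ht.1, ht.2]⟩
    · simp only [hrt, ← hc]
      have horto : ‖(x : EuclideanSpace ℝ (Fin (n+1))) - c • b 0‖ ^ 2 = 1 - c ^ 2 := by
        rw [hb0, norm_sub_sq_real, norm_smul, real_inner_smul_right, hxnorm, hx₀, hcinner,
          real_inner_comm, Real.norm_eq_abs, mul_one, sq_abs]
        ring
      have hsum : ∑ j : Fin n, (b.repr (x : EuclideanSpace ℝ (Fin (n+1)))
          ((0 : Fin (n+1)).succAbove j)) ^ 2 = 1 - c ^ 2 := by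
        rw [← hnorm_repr, ← hc, horto]
      have hkey : 1 - c ^ 2 ≤ a ^ 2 * c ^ 2 := by
        have h1c : a ^ 2 * (1 - ε ^ 2 / 2) ^ 2 ≤ a ^ 2 * c ^ 2 :=
          mul_le_mul_of_nonneg_left (pow_le_pow_left₀ h2.le hclb 2) (sq_nonneg a)
        nlinarith [h1c, ha2]
      calc ∑ j : Fin n, (t * b.repr (x : EuclideanSpace ℝ (Fin (n+1)))
            ((0 : Fin (n+1)).succAbove j)) ^ 2
          = t ^ 2 * ∑ j : Fin n, (b.repr (x : EuclideanSpace ℝ (Fin (n+1)))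
            ((0 : Fin (n+1)).succAbove j)) ^ 2 := by
            rw [Finset.mul_sum]; exact Finset.sum_congr rfl fun j _ => by ring
        _ = t ^ 2 * (1 - c ^ 2) := by rw [hsum]
        _ ≤ t ^ 2 * (a ^ 2 * c ^ 2) := mul_le_mul_of_nonneg_left hkey (sq_nonneg t)
        _ = a ^ 2 * (t * c) ^ 2 := by ring
  -- volume of the coordinate cone
  have hvolD : (volume : Measure (ℝ × (Fin n → ℝ))) D
      = ENNReal.ofReal (a ^ n / (n + 1)) * volume (ball (0 : EuclideanSpace ℝ (Fin n)) 1) := by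
    rw [Measure.volume_eq_prod, Measure.prod_apply hDmeas]
    have hsec : ∀ u : ℝ, (volume : Measure (Fin n → ℝ)) (Prod.mk u ⁻¹' D)
        = (Ioo (0:ℝ) 1).indicator (fun u => ENNReal.ofReal ((a * u) ^ n)
            * volume (ball (0 : EuclideanSpace ℝ (Fin n)) 1)) u := by
      intro u
      by_cases hu : u ∈ Ioo (0:ℝ) 1
      · rw [indicator_of_mem hu,
          ← (EuclideanSpace.volume_preserving_symm_measurableEquiv_toLp (Fin n)).measure_preimage
            (hDmeas.preimage measurable_prodMk_left).nullMeasurableSet]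
        have hau : 0 ≤ a * u := mul_nonneg ha0 hu.1.le
        have he : (MeasurableEquiv.toLp 2 (Fin n → ℝ)).symm ⁻¹' (Prod.mk u ⁻¹' D)
            = closedBall (0 : EuclideanSpace ℝ (Fin n)) (a * u) := by
          ext x
          simp only [hDdef, mem_preimage, mem_setOf_eq, hu, true_and, mem_closedBall,
            dist_zero_right]
          have hnx : ‖x‖ = Real.sqrt (∑ j, (MeasurableEquiv.toLp 2 (Fin n → ℝ)).symm x j ^ 2) := by
            rw [EuclideanSpace.norm_eq]
            congr 1
            refine Finset.sum_congr rfl fun j _ => ?_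
            rw [Real.norm_eq_abs, sq_abs]
            rfl
          rw [hnx, show a ^ 2 * u ^ 2 = (a * u) ^ 2 by ring]
          constructor
          · intro h
            calc Real.sqrt (∑ j, (MeasurableEquiv.toLp 2 (Fin n → ℝ)).symm x j ^ 2)
                ≤ Real.sqrt ((a * u) ^ 2) := Real.sqrt_le_sqrt h
              _ = a * u := Real.sqrt_sq hau
          · intro h
            have h2' := pow_le_pow_left₀ (Real.sqrt_nonneg _) h 2
            rwa [Real.sq_sqrt (by positivity)] at h2'
        rw [he, Measure.addHaar_closedBall _ _ hau, finrank_euclideanSpace_fin]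
      · rw [indicator_of_notMem hu]
        have he : (Prod.mk u ⁻¹' D) = ∅ := by
          ext v
          simp only [hDdef, mem_preimage, mem_setOf_eq, mem_empty_iff_false, iff_false]
          exact fun h => hu h.1
        rw [he]
        exact measure_empty
    simp_rw [hsec]
    rw [lintegral_indicator measurableSet_Ioo, lintegral_mul_const' _ _ measure_ball_lt_top.ne]
    congr 1
    rw [Measure.restrict_congr_set Ioo_ae_eq_Ioc, ← ofReal_integral_eq_lintegral_ofReal]
    · rw [← intervalIntegral.integral_of_le zero_le_one]
      congr 1
      simp_rw [mul_pow]
      rw [intervalIntegral.integral_const_mul, integral_pow]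
      simp [div_eq_mul_inv]
    · refine (((intervalIntegral.intervalIntegrable_pow n).1).const_mul (a ^ n)).congr ?_
      filter_upwards with u using by rw [mul_pow]
    · filter_upwards [ae_restrict_mem measurableSet_Ioc] with u hu
      exact pow_nonneg (mul_nonneg ha0 hu.1.le) n
  -- the surface measure of the cap
  have hA : μs cap = ((n + 1 : ℕ) : ℝ≥0∞)
      * volume (Ioo (0:ℝ) 1 • (Subtype.val '' cap)) := by
    rw [hμs, Measure.toSphere_apply' _ hcapm, finrank_euclideanSpace_fin]
  set B : ℝ≥0∞ := volume (ball (0 : EuclideanSpace ℝ (Fin n)) 1) with hB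
  have hle : μs cap ≤ ((n + 1 : ℕ) : ℝ≥0∞) * (ENNReal.ofReal (a ^ n / (n + 1)) * B) := by
    rw [hA]
    refine mul_le_mul_right ?_ _
    calc volume (Ioo (0:ℝ) 1 • (Subtype.val '' cap)) ≤ volume (Φ ⁻¹' D) := measure_mono hsub
      _ = volume D := hΦ.measure_preimage hDmeas.nullMeasurableSet
      _ = ENNReal.ofReal (a ^ n / (n + 1)) * B := hvolD
  have hfin : ((n + 1 : ℕ) : ℝ≥0∞) * (ENNReal.ofReal (a ^ n / (n + 1)) * B) ≠ ⊤ :=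
    ENNReal.mul_ne_top (ENNReal.natCast_ne_top _)
      (ENNReal.mul_ne_top ENNReal.ofReal_ne_top measure_ball_lt_top.ne)
  have hVpos : 0 < V := by
    rw [hV]
    exact ENNReal.toReal_pos (measure_ball_pos volume 0 one_pos).ne' measure_ball_lt_top.ne
  calc (μs cap).toReal
      ≤ (((n + 1 : ℕ) : ℝ≥0∞) * (ENNReal.ofReal (a ^ n / (n + 1)) * B)).toReal :=
        ENNReal.toReal_mono hfin hle
    _ = a ^ n * V := by
        rw [ENNReal.toReal_mul, ENNReal.toReal_mul, ENNReal.toReal_natCast,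
          ENNReal.toReal_ofReal (div_nonneg (pow_nonneg ha0 n) (by positivity)), hV, hB]
        push_cast
        field_simp
    _ < g ^ n * V := by
        refine mul_lt_mul_of_pos_right (pow_lt_pow_left₀ hag ha0 ?_) hVpos
        omega
end
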